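/- Let Q be a type A_n quiver and let I = [x_1,x_2], J = [y_1,y_2] be disjoint intervals with x_2 <= y_2. If \chi_Q(d_I, d_J) < 0, then y_1 = x_2 + 1 and the arrow a_{x_2} points to the right (i.e. t(a_{x_2}) = x_2, h(a_{x_2}) = x_2+1); moreover in that case \chi_Q(d_I,d_J) = -1. -/

import Mathlib

/-- For a type `Aₙ` quiver, arrow `aᵢ` joins vertices `i` and `i+1`; `dir i = true`
means `aᵢ` points right.  `tail dir i` is the tail of `aᵢ`. -/
def qtail (dir : ℕ → Bool) (i : ℕ) : ℕ := if dir i then i else i + 1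

/-- The head of the arrow `aᵢ`. -/
def qhead (dir : ℕ → Bool) (i : ℕ) : ℕ := if dir i then i + 1 else i

/-- The indicator dimension vector of the interval `[a,b]`. -/
def ind (a b x : ℕ) : ℤ := if a ≤ x ∧ x ≤ b then 1 else 0

/-- The Euler form of a type `Aₙ` quiver with arrow directions `dir`:
`χ(d₁,d₂) = ∑ₓ d₁(x)d₂(x) - ∑ₐ d₁(t(a))d₂(h(a))`. -/
def euler (n : ℕ) (dir : ℕ → Bool) (d1 d2 : ℕ → ℤ) : ℤ :=
  (∑ x ∈ Finset.Icc 1 n, d1 x * d2 x) -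
    ∑ i ∈ Finset.Icc 1 (n - 1), d1 (qtail dir i) * d2 (qhead dir i)

/-- For disjoint intervals `I=[x₁,x₂]`, `J=[y₁,y₂]` with `x₂ ≤ y₂`: if the Euler form
is negative then `y₁ = x₂+1`, the arrow `a_{x₂}` points right, and the Euler form is `-1`. -/
theorem euler_disjoint_neg (n x1 x2 y1 y2 : ℕ) (dir : ℕ → Bool)
    (h1 : 1 ≤ x1) (h2 : x1 ≤ x2) (h3 : y1 ≤ y2) (h4 : y2 ≤ n)
    (h5 : x2 ≤ y2) (hdisj : x2 < y1)
    (hneg : euler n dir (ind x1 x2) (ind y1 y2) < 0) :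
    y1 = x2 + 1 ∧ dir x2 = true ∧ euler n dir (ind x1 x2) (ind y1 y2) = -1 := by
  have hsum1 : (∑ x ∈ Finset.Icc 1 n, ind x1 x2 x * ind y1 y2 x) = 0 := by
    apply Finset.sum_eq_zero
    intro x _
    unfold ind
    split_ifs with ha hb hb
    · exfalso; omega
    all_goals simp
  have hsum2 : (∑ i ∈ Finset.Icc 1 (n-1),
      ind x1 x2 (qtail dir i) * ind y1 y2 (qhead dir i))
      = ind x1 x2 (qtail dir x2) * ind y1 y2 (qhead dir x2) := by
    apply Finset.sum_eq_single_of_mem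
    · simp only [Finset.mem_Icc]; omega
    · intro i _ hne
      unfold qtail qhead ind
      rcases Bool.eq_false_or_eq_true (dir i) with h | h <;>
        simp only [h, if_true, if_false, Bool.false_eq_true] <;>
        split_ifs <;> first | rfl | (exfalso; omega) | simp
  have heuler : euler n dir (ind x1 x2) (ind y1 y2)
      = -(ind x1 x2 (qtail dir x2) * ind y1 y2 (qhead dir x2)) := by
    rw [euler, hsum1, hsum2]; ring
  rw [heuler] at hneg ⊢
  rcases Bool.eq_false_or_eq_true (dir x2) with h | h
  · -- dir x2 = true
    have hy : y1 = x2 + 1 := by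
      unfold qtail qhead ind at hneg
      simp only [h, if_true] at hneg
      split_ifs at hneg <;> first | omega | norm_num at hneg
    have c1 : x1 ≤ x2 ∧ x2 ≤ x2 := ⟨h2, le_rfl⟩
    have c2 : y1 ≤ x2 + 1 ∧ x2 + 1 ≤ y2 := by omega
    refine ⟨hy, h, ?_⟩
    simp [qtail, qhead, ind, h, c1, c2]
  · -- dir x2 = false
    exfalso
    unfold qtail qhead ind at hneg
    simp only [h, Bool.false_eq_true, if_false] at hneg
    split_ifs at hneg <;> first | omega | norm_num at hneg
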